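/- Let (X, 𝒜, μ) be a σ-finite measure space and let p, q : X → ℝ be measurable functions with p(x) > 0 and q(x) > 0 for μ-a.e. x, and ∫ p dμ = 1 and ∫ q dμ = 1. Let D : X → ℝ be measurable with 0 < D(x) < 1 for μ-a.e. x. Assume the functions x ↦ p(x)·log D(x) + q(x)·log(1 − D(x)) and x ↦ p(x)·log(p(x)/(p(x)+q(x))) + q(x)·log(q(x)/(p(x)+q(x))) are μ-integrable. Then ∫ (p·log D + q·log(1 − D)) dμ ≤ ∫ (p·log(p/(p+q)) + q·log(q/(p+q))) dμ. -/
import Mathlib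


open MeasureTheory

lemma gan_pointwise {a b d : ℝ} (ha : 0 < a) (hb : 0 < b) (hd0 : 0 < d) (hd1 : d < 1) :
    a * Real.log d + b * Real.log (1 - d) ≤
      a * Real.log (a / (a + b)) + b * Real.log (b / (a + b)) := by
  have hab : 0 < a + b := by linarith
  have h1d : 0 < 1 - d := by linarith
  have key1 : a * (Real.log d - Real.log (a / (a + b))) ≤ d * (a + b) - a := by
    have hx : 0 < d * (a + b) / a := by positivity
    have hlog : Real.log (d * (a + b) / a) ≤ d * (a + b) / a - 1 :=
      Real.log_le_sub_one_of_pos hx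
    have heq : Real.log d - Real.log (a / (a + b)) = Real.log (d * (a + b) / a) := by
      rw [Real.log_div (by positivity) hab.ne', Real.log_div (by positivity) ha.ne',
        Real.log_mul hd0.ne' hab.ne']
      ring
    rw [heq]
    calc a * Real.log (d * (a + b) / a) ≤ a * (d * (a + b) / a - 1) := by
          exact mul_le_mul_of_nonneg_left hlog ha.le
      _ = d * (a + b) - a := by field_simp
  have key2 : b * (Real.log (1 - d) - Real.log (b / (a + b))) ≤ (1 - d) * (a + b) - b := by
    have hx : 0 < (1 - d) * (a + b) / b := by positivity
    have hlog : Real.log ((1 - d) * (a + b) / b) ≤ (1 - d) * (a + b) / b - 1 :=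
      Real.log_le_sub_one_of_pos hx
    have heq : Real.log (1 - d) - Real.log (b / (a + b)) = Real.log ((1 - d) * (a + b) / b) := by
      rw [Real.log_div (by positivity) hab.ne', Real.log_div (by positivity) hb.ne',
        Real.log_mul h1d.ne' hab.ne']
      ring
    rw [heq]
    calc b * Real.log ((1 - d) * (a + b) / b) ≤ b * ((1 - d) * (a + b) / b - 1) := by
          exact mul_le_mul_of_nonneg_left hlog hb.le
      _ = (1 - d) * (a + b) - b := by field_simp
  nlinarith [key1, key2]

theorem gan_optimal_discriminator
    {X : Type*} [MeasurableSpace X] (μ : Measure X) [SigmaFinite μ]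
    (p q D : X → ℝ)
    (hpm : Measurable p) (hqm : Measurable q) (hDm : Measurable D)
    (hp0 : ∀ᵐ x ∂μ, 0 < p x) (hq0 : ∀ᵐ x ∂μ, 0 < q x)
    (hp1 : ∫ x, p x ∂μ = 1) (hq1 : ∫ x, q x ∂μ = 1)
    (hD : ∀ᵐ x ∂μ, 0 < D x ∧ D x < 1)
    (hint1 : Integrable
      (fun x => p x * Real.log (D x) + q x * Real.log (1 - D x)) μ)
    (hint2 : Integrable
      (fun x => p x * Real.log (p x / (p x + q x)) +
        q x * Real.log (q x / (p x + q x))) μ) :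
    ∫ x, (p x * Real.log (D x) + q x * Real.log (1 - D x)) ∂μ ≤
      ∫ x, (p x * Real.log (p x / (p x + q x)) +
        q x * Real.log (q x / (p x + q x))) ∂μ := by
  refine integral_mono_ae hint1 hint2 ?_
  filter_upwards [hp0, hq0, hD] with x hp hq hDx
  exact gan_pointwise hp hq hDx.1 hDx.2
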